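/- arXiv:1707.08762 — 2 statements merged into one kernel-verified Lean document; each statement's English description precedes it below -/
import Mathlib

section
/- The grounded extension of an attack graph is conflict-free: there are no t, t' in the least fixed point of the characteristic function such that t ⤙ t'. -/
def defends {α : Type*} (atk : α → α → Prop) (T : Set α) : Set α :=
  {t | ∀ t', atk t t' → ∃ t'' ∈ T, atk t' t''}

/-- The grounded extension: the least fixed point of the defense function,
constructed as the intersection of all prefixed points. -/
def groundedExt {α : Type*} (atk : α → α → Prop) : Set α :=
  ⋂₀ {T : Set α | defends atk T ⊆ T}

lemma defends_mono {α : Type*} (atk : α → α → Prop) {T S : Set α} (h : T ⊆ S) :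
    defends atk T ⊆ defends atk S := by
  intro x hx y hy
  obtain ⟨z, hz, hzy⟩ := hx y hy
  exact ⟨z, h hz, hzy⟩

lemma groundedExt_pre {α : Type*} (atk : α → α → Prop) :
    defends atk (groundedExt atk) ⊆ groundedExt atk := by
  intro x hx T hT
  exact hT (defends_mono atk (Set.sInter_subset_of_mem hT) hx)

lemma groundedExt_le {α : Type*} (atk : α → α → Prop) {T : Set α}
    (hT : defends atk T ⊆ T) : groundedExt atk ⊆ T :=
  Set.sInter_subset_of_mem hT

lemma groundedExt_post {α : Type*} (atk : α → α → Prop) :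
    groundedExt atk ⊆ defends atk (groundedExt atk) :=
  groundedExt_le atk (defends_mono atk (groundedExt_pre atk))

/-- The grounded extension is conflict-free. -/
theorem groundedExt_conflictFree {α : Type*} (atk : α → α → Prop) :
    ¬ ∃ t t', t ∈ groundedExt atk ∧ t' ∈ groundedExt atk ∧ atk t t' := by
  set G := groundedExt atk with hG
  set T : Set α := {x | x ∈ G ∧ ∀ y ∈ G, ¬ atk x y ∧ ¬ atk y x} with hTdef
  -- key case: no y ∈ G attacks x when x ∈ defends T
  have key : ∀ x ∈ defends atk T, ∀ y ∈ G, ¬ atk x y := by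
    intro x hx y hyG hxy
    obtain ⟨z, hzT, hyz⟩ := hx y hxy
    -- y ∈ G ⊆ defends G, attacker z of y gives w ∈ G with atk z w
    obtain ⟨w, hwG, hzw⟩ := groundedExt_post atk hyG z hyz
    exact (hzT.2 w hwG).1 hzw
  have hTpre : defends atk T ⊆ T := by
    intro x hx
    have hxG : x ∈ G := groundedExt_pre atk
      (defends_mono atk (fun a ha => ha.1) hx)
    refine ⟨hxG, fun y hyG => ⟨key x hx y hyG, ?_⟩⟩
    intro hyx
    -- x attacks y (atk y x); y ∈ defends G gives w ∈ G attacking x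
    obtain ⟨w, hwG, hxw⟩ := groundedExt_post atk hyG x hyx
    exact key x hx w hwG hxw
  rintro ⟨t, t', ht, ht', hatk⟩
  exact ((groundedExt_le atk hTpre ht).2 t' ht').1 hatk
end

section
/- Given a belief neighborhood model (X, N), define the topological argumentation model with τ = 2^X and attack relation: for t' ≠ ∅, t ⤙ t' iff t ∩ t' = ∅ and t ∉ N; and t ⤙ ∅ iff t = ∅. Then this attack relation satisfies the three axioms of a topological argumentation model. -/
/-- The attack relation induced by a belief neighborhood `N` on `τ = 2^X`:
for `t' ≠ ∅`, `t' attacks t` iff they are disjoint and `t ∉ N`; the empty set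
is attacked only by everything attacking it and attacks only itself. -/
def nbAttack {X : Type*} (N : Set (Set X)) (t t' : Set X) : Prop :=
  (t' ≠ ∅ ∧ t ∩ t' = ∅ ∧ t ∉ N) ∨ (t' = ∅ ∧ t = ∅)

/-- The attack relation built from a belief neighborhood model satisfies the
three axioms of a topological argumentation model (with `τ = 2^X`). -/
theorem nbAttack_is_attack_relation {X : Type*} (N : Set (Set X))
    (hX : Set.univ ∈ N)
    (hsup : ∀ b b' : Set X, b ∈ N → b ⊆ b' → b' ∈ N)
    (hcomp : ∀ b : Set X, b ∈ N → bᶜ ∉ N) :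
    (∀ t₁ t₂ : Set X, t₁ ∩ t₂ = ∅ ↔ nbAttack N t₁ t₂ ∨ nbAttack N t₂ t₁) ∧
    (∀ t t₁ t₁' : Set X, nbAttack N t₁ t → t₁' ⊆ t₁ → nbAttack N t₁' t) ∧
    (∀ t : Set X, t ≠ ∅ → nbAttack N ∅ t ∧ ¬ nbAttack N t ∅) := by
  have hempty : (∅ : Set X) ∉ N := by
    have := hcomp Set.univ hX
    simpa using this
  refine ⟨?_, ?_, ?_⟩
  · intro t₁ t₂
    constructor
    · intro hdisj
      by_cases h2 : t₂ = (∅ : Set X)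
      · subst h2
        by_cases h1 : t₁ = (∅ : Set X)
        · exact Or.inl (Or.inr ⟨rfl, h1⟩)
        · exact Or.inr (Or.inl ⟨h1, by simp, hempty⟩)
      · by_cases h1N : t₁ ∈ N
        · by_cases h1 : t₁ = (∅ : Set X)
          · exact absurd (h1 ▸ h1N) hempty
          · refine Or.inr (Or.inl ⟨h1, by rw [Set.inter_comm]; exact hdisj, ?_⟩)
            intro h2N
            exact hcomp t₁ h1N (hsup t₂ t₁ᶜ h2N
              (Set.disjoint_iff_inter_eq_empty.mpr hdisj).subset_compl_left)
        · exact Or.inl (Or.inl ⟨h2, hdisj, h1N⟩)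
    · rintro ((⟨-, h, -⟩ | ⟨h2, h1⟩) | (⟨-, h, -⟩ | ⟨h1, h2⟩))
      · exact h
      · simp [h1, h2]
      · rw [Set.inter_comm]; exact h
      · simp [h1]
  · rintro t t₁ t₁' (⟨ht, hd, hN⟩ | ⟨ht, h1⟩) hsub
    · exact Or.inl ⟨ht, Set.subset_empty_iff.mp (le_trans (Set.inter_subset_inter_left t hsub) hd.le), fun h => hN (hsup t₁' t₁ h hsub)⟩
    · exact Or.inr ⟨ht, Set.subset_empty_iff.mp (h1 ▸ hsub)⟩
  · intro t ht
    refine ⟨Or.inl ⟨ht, by simp, hempty⟩, ?_⟩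
    rintro (⟨h, -⟩ | ⟨-, h⟩)
    · exact h rfl
    · exact ht h
end
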